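/- The exponential generating function identity ∑_{n≥0} F_n(s) z^n/n! = -e^z · ∑_{n≥0} F_n(s) (-z)^n/n! holds as an identity of formal power series in z with coefficients polynomials in s. -/

import Mathlib

open Polynomial PowerSeries Finset

noncomputable def fibPoly : ℕ → Polynomial ℚ
  | 0 => 0
  | 1 => 1
  | n + 2 => fibPoly (n + 1) + Polynomial.X * fibPoly n

noncomputable def B (u : ℕ → Polynomial ℚ) (n : ℕ) : Polynomial ℚ :=
  ∑ j ∈ Finset.range (n + 1), ((-1 : ℚ) ^ j * (n.choose j : ℚ)) • u j

lemma B_shift (u : ℕ → Polynomial ℚ) (n : ℕ) :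
    B u (n + 1) = B u n - B (fun j => u (j + 1)) n := by
  have key : ∑ i ∈ Finset.range (n+1), ((-1:ℚ)^i * (n.choose (i+1) : ℚ)) • u (i+1)
      = (1:ℚ) • u 0 - B u n := by
    unfold B
    rw [Finset.sum_range_succ' (fun j => ((-1:ℚ)^j * (n.choose j : ℚ)) • u j)]
    rw [Finset.sum_range_succ]
    have hz : ((-1:ℚ)^n * (n.choose (n+1) : ℚ)) • u (n+1) = 0 := by
      simp [Nat.choose_succ_self]
    have hs : ∀ i, ((-1:ℚ)^(i+1) * (n.choose (i+1) : ℚ)) • u (i+1)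
        = -(((-1:ℚ)^i * (n.choose (i+1) : ℚ)) • u (i+1)) := by
      intro i; rw [pow_succ]; module
    simp only [hs, hz, pow_zero, Nat.choose_zero_right, Nat.cast_one, one_mul, add_zero,
      Finset.sum_neg_distrib]
    abel
  unfold B
  rw [Finset.sum_range_succ' (fun j => ((-1:ℚ)^j * ((n+1).choose j : ℚ)) • u j)]
  have h1 : ∀ i, ((-1:ℚ)^(i+1) * (((n+1).choose (i+1)) : ℚ)) • u (i+1)
      = -(((-1:ℚ)^i * (n.choose i : ℚ)) • u (i+1))
        - ((-1:ℚ)^i * (n.choose (i+1) : ℚ)) • u (i+1) := by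
    intro i; rw [Nat.choose_succ_succ]; push_cast; rw [pow_succ]; module
  simp only [h1]
  rw [Finset.sum_sub_distrib, Finset.sum_neg_distrib, key]
  simp only [pow_zero, Nat.choose_zero_right, Nat.cast_one, one_mul]
  abel

lemma B_rec (n : ℕ) : B fibPoly (n + 2) = B fibPoly (n + 1) + Polynomial.X * B fibPoly n := by
  have hlin : ∀ m, B (fun j => fibPoly (j + 2)) m
      = B (fun j => fibPoly (j+1)) m + Polynomial.X * B fibPoly m := by
    intro m
    unfold B
    rw [Finset.mul_sum, ← Finset.sum_add_distrib]
    refine Finset.sum_congr rfl fun j _ => ?_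
    show ((-1:ℚ)^j * (m.choose j:ℚ)) • fibPoly (j+2) = _
    rw [show fibPoly (j+2) = fibPoly (j+1) + Polynomial.X * fibPoly j from rfl]
    rw [smul_add]
    congr 1
    rw [Polynomial.smul_eq_C_mul, Polynomial.smul_eq_C_mul]
    ring
  have h1 := B_shift fibPoly (n+1)
  have h2 := B_shift fibPoly n
  have h3 := B_shift (fun j => fibPoly (j+1)) n
  have h4 := hlin n
  -- from h3: B F1 (n+1) = B F1 n - B F2 n, B F2 n = B F1 n + X * B F n
  -- so B F1 (n+1) = - X * B F n
  -- h1: B F (n+2) = B F (n+1) - B F1 (n+1) = B F (n+1) + X * B F n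
  have : B (fun j => fibPoly (j+1)) (n+1) = - (Polynomial.X * B fibPoly n) := by
    rw [h3]
    have : (fun j => fibPoly (j + 1 + 1)) = (fun j => fibPoly (j + 2)) := rfl
    rw [this, h4]
    abel
  rw [h1, this]
  abel

lemma B_eq (n : ℕ) : B fibPoly n = -fibPoly n := by
  induction n using Nat.twoStepInduction with
  | zero => simp [B, fibPoly]
  | one => simp [B, fibPoly, Finset.sum_range_succ]
  | more n ih1 ih2 =>
    rw [B_rec, ih1, ih2, show fibPoly (n+2) = fibPoly (n+1) + Polynomial.X * fibPoly n from rfl]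
    ring

theorem fib_egf_identity :
    PowerSeries.mk (fun n => ((n.factorial : ℚ)⁻¹) • fibPoly n) =
      -(PowerSeries.mk (fun n => ((n.factorial : ℚ)⁻¹) • (1 : Polynomial ℚ))) *
        PowerSeries.mk (fun n => ((-1 : ℚ) ^ n * (n.factorial : ℚ)⁻¹) • fibPoly n) := by
  ext n
  rw [neg_mul, map_neg, PowerSeries.coeff_mul, PowerSeries.coeff_mk]
  simp only [PowerSeries.coeff_mk]
  rw [Finset.Nat.sum_antidiagonal_eq_sum_range_succ_mk]
  have hterm : ∀ k ∈ Finset.range (n+1),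
      ((k.factorial : ℚ)⁻¹ • (1 : Polynomial ℚ)) *
        (((-1:ℚ)^(n-k) * ((n-k).factorial : ℚ)⁻¹) • fibPoly (n-k))
      = ((n.factorial : ℚ)⁻¹ * ((-1:ℚ)^(n-k) * (n.choose (n-k) : ℚ))) • fibPoly (n-k) := by
    intro k hk
    rw [Finset.mem_range] at hk
    have hk' : k ≤ n := Nat.lt_succ_iff.mp hk
    rw [smul_mul_assoc, one_mul, smul_smul]
    congr 1
    have hfact : ((n.choose (n-k) : ℚ)) * ((n-k).factorial : ℚ) * ((n - (n-k)).factorial : ℚ)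
        = (n.factorial : ℚ) := by
      exact_mod_cast congrArg (Nat.cast : ℕ → ℚ)
        (Nat.choose_mul_factorial_mul_factorial (Nat.sub_le n k))
    rw [Nat.sub_sub_self hk'] at hfact
    have h1 : ((n-k).factorial : ℚ) ≠ 0 := Nat.cast_ne_zero.mpr (Nat.factorial_ne_zero _)
    have h2 : ((k).factorial : ℚ) ≠ 0 := Nat.cast_ne_zero.mpr (Nat.factorial_ne_zero _)
    have h3 : ((n).factorial : ℚ) ≠ 0 := Nat.cast_ne_zero.mpr (Nat.factorial_ne_zero _)
    have hfact2 : ((n.choose k : ℚ)) * (k.factorial : ℚ) * ((n-k).factorial : ℚ)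
        = (n.factorial : ℚ) := by
      exact_mod_cast congrArg (Nat.cast : ℕ → ℚ)
        (Nat.choose_mul_factorial_mul_factorial hk')
    field_simp
    linear_combination (-1:ℚ) * hfact
  rw [Finset.sum_congr rfl hterm]
  have hrefl := Finset.sum_range_reflect
    (fun k => ((n.factorial : ℚ)⁻¹ * ((-1:ℚ)^(n-k) * (n.choose (n-k) : ℚ))) • fibPoly (n-k)) (n+1)
  simp only [Nat.add_sub_cancel] at hrefl
  rw [← hrefl]
  have hsum : ∑ j ∈ Finset.range (n+1),
      ((n.factorial : ℚ)⁻¹ * ((-1:ℚ)^(n-(n-j)) * (n.choose (n-(n-j)) : ℚ))) • fibPoly (n-(n-j))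
      = (n.factorial : ℚ)⁻¹ • B fibPoly n := by
    unfold B
    rw [Finset.smul_sum]
    refine Finset.sum_congr rfl fun j hj => ?_
    rw [Finset.mem_range] at hj
    rw [Nat.sub_sub_self (Nat.lt_succ_iff.mp hj), smul_smul]
  rw [hsum, B_eq, smul_neg, neg_neg]
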